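/- Suppose the log-Sobolev inequality Ent_π(F²) ≤ C·E(F,F) holds for the second quantization Dirichlet form E on Poisson space with some constant C > 0, where the base form E₀ is a Dirichlet form on L²(μ) with μ nontrivial. Applying it to F(γ) = e^{γ(f)} for f = log(n g + 1) with g ≥ 0 nontrivial in the base domain, dividing by n² log n, and letting n → ∞ yields μ(g²) ≤ 0, a contradiction. Hence the second quantization Dirichlet form never satisfies a log-Sobolev inequality when μ is nontrivial. -/

import Mathlib

open MeasureTheory Real

lemma aux_log_lb {u : ℝ} (hu : 1 ≤ u) : 1 - 1/u ≤ Real.log u := by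
  have h0 : 0 < u := lt_of_lt_of_le one_pos hu
  have h := Real.log_le_sub_one_of_pos (show (0:ℝ) < 1/u by positivity)
  rw [Real.log_div one_ne_zero (ne_of_gt h0), Real.log_one] at h
  linarith

lemma aux_nonneg {u : ℝ} (hu : 1 ≤ u) : 0 ≤ 2*u^2*Real.log u - u^2 + 1 := by
  have h0 : 0 < u := lt_of_lt_of_le one_pos hu
  have h := aux_log_lb hu
  have h2 : 2*u^2*(1 - 1/u) ≤ 2*u^2*Real.log u := by nlinarith
  have h3 : 2*u^2*(1-1/u) = 2*u^2 - 2*u := by field_simp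
  nlinarith

lemma aux_upper {u : ℝ} (hu : 1 ≤ u) : 2*u^2*Real.log u - u^2 + 1 ≤ 2*u^2*(u-1) := by
  have h0 : 0 < u := lt_of_lt_of_le one_pos hu
  have h := Real.log_le_sub_one_of_pos h0
  nlinarith

lemma aux_lower {u : ℝ} (hu : 3 ≤ u) : (u-1)^2 * Real.log u ≤ 2*u^2*Real.log u - u^2 + 1 := by
  have h0 : (0:ℝ) < u := by linarith
  have h1 : 1 ≤ Real.log u := by
    rw [Real.le_log_iff_exp_le h0]
    calc Real.exp 1 ≤ 2.7182818286 := le_of_lt Real.exp_one_lt_d9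
    _ ≤ u := by linarith
  nlinarith

set_option maxHeartbeats 1000000 in
/-- The second quantization Dirichlet form `𝔈` on Poisson space never satisfies a
log-Sobolev inequality `Ent_pm(F²) ≤ C·𝔈(F,F)` when the intensity `μ` is
nontrivial. The Poisson structure is encoded through the entropy and energy
identities for the exponential functionals `F γ = exp(γ(f))`, which follow from
the Laplace transform of `pm`. -/
theorem stmt_17 {E : Type*} [MeasurableSpace E] (μ : Measure E) [SigmaFinite μ]
    (pm : Measure (Measure E)) [IsProbabilityMeasure pm]
    (𝔈 : (Measure E → ℝ) → ℝ) (Dom : Set (Measure E → ℝ))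
    (E₀ : (E → ℝ) → ℝ) (Dom₀ : Set (E → ℝ))
    -- μ is nontrivial: there is a nontrivial nonnegative bounded f₀ in the base domain
    (f₀ : E → ℝ) (hf₀ : f₀ ∈ Dom₀) (hmf₀ : Measurable f₀)
    (hf₀pos : ∀ x, 0 ≤ f₀ x) (hf₀b : ∃ M : ℝ, ∀ x, f₀ x ≤ M)
    (hf₀1 : Integrable f₀ μ) (hf₀2 : Integrable (fun x => f₀ x ^ 2) μ)
    (hnontriv : 0 < ∫ x, f₀ x ^ 2 ∂μ)
    -- the base domain is closed under f₀ ↦ log (n f₀ + 1)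
    (hclosed : ∀ n : ℕ, (fun x => Real.log (n * f₀ x + 1)) ∈ Dom₀)
    -- exponential functionals of base-domain functions belong to the domain of 𝔈
    (hmemDom : ∀ f ∈ Dom₀,
      (fun γ : Measure E => Real.exp (∫ x, f x ∂γ)) ∈ Dom)
    -- entropy identity: Ent_pm(F²) = pm(F²)·∫(2 f e^{2f} − e^{2f} + 1) dμ
    (hEnt : ∀ f ∈ Dom₀,
      (∫ γ, (Real.exp (∫ x, f x ∂γ)) ^ 2
          * Real.log ((Real.exp (∫ x, f x ∂γ)) ^ 2) ∂pm)
        - (∫ γ, (Real.exp (∫ x, f x ∂γ)) ^ 2 ∂pm)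
            * Real.log (∫ γ, (Real.exp (∫ x, f x ∂γ)) ^ 2 ∂pm)
      = (∫ γ, (Real.exp (∫ x, f x ∂γ)) ^ 2 ∂pm)
          * ∫ x, (2 * f x * Real.exp (2 * f x) - Real.exp (2 * f x) + 1) ∂μ)
    -- energy identity: 𝔈(F,F) = pm(F²)·E₀(e^f − 1, e^f − 1)
    (hEform : ∀ f ∈ Dom₀,
      𝔈 (fun γ : Measure E => Real.exp (∫ x, f x ∂γ))
        = (∫ γ, (Real.exp (∫ x, f x ∂γ)) ^ 2 ∂pm)
            * E₀ (fun x => Real.exp (f x) - 1))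
    (hfin : ∀ f ∈ Dom₀, 0 < ∫ γ, (Real.exp (∫ x, f x ∂γ)) ^ 2 ∂pm)
    -- E₀ is quadratic
    (hscale : ∀ (c : ℝ) (f : E → ℝ), E₀ (fun x => c * f x) = c ^ 2 * E₀ f) :
    ¬ ∃ C : ℝ, 0 < C ∧ ∀ F ∈ Dom,
        (∫ γ, F γ ^ 2 * Real.log (F γ ^ 2) ∂pm)
            - (∫ γ, F γ ^ 2 ∂pm) * Real.log (∫ γ, F γ ^ 2 ∂pm)
          ≤ C * 𝔈 F := by
  rintro ⟨C, hC, hLSI⟩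
  obtain ⟨M, hM⟩ := hf₀b
  set If := ∫ x, f₀ x ∂μ with hIf
  set I2 := ∫ x, f₀ x ^ 2 ∂μ with hI2
  have hIf0 : 0 ≤ If := integral_nonneg hf₀pos
  set ε : ℝ := I2 / (2 * (If + 1)) with hε
  have hεpos : 0 < ε := by positivity
  set A : Set E := {x | ε ≤ f₀ x} with hAdef
  have hA : MeasurableSet A := measurableSet_le measurable_const hmf₀
  set IA := ∫ x in A, f₀ x ^ 2 ∂μ with hIAdef
  -- IA > 0
  have hIA : 0 < IA := by
    have hsplit : (∫ x in A, f₀ x ^ 2 ∂μ) + ∫ x in Aᶜ, f₀ x ^ 2 ∂μ = I2 :=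
      integral_add_compl hA hf₀2
    have hcomp : ∫ x in Aᶜ, f₀ x ^ 2 ∂μ ≤ ∫ x in Aᶜ, ε * f₀ x ∂μ := by
      apply setIntegral_mono_on (hf₀2.integrableOn) ((hf₀1.const_mul ε).integrableOn)
        hA.compl
      intro x hx
      have hxε : f₀ x < ε := by simpa [hAdef] using hx
      have := hf₀pos x
      nlinarith
    have hcomp2 : ∫ x in Aᶜ, ε * f₀ x ∂μ = ε * ∫ x in Aᶜ, f₀ x ∂μ := by
      rw [integral_const_mul]
    have hcomp3 : ∫ x in Aᶜ, f₀ x ∂μ ≤ If :=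
      setIntegral_le_integral hf₀1 (Filter.Eventually.of_forall hf₀pos)
    have hεIf : ε * If < I2 := by
      rw [hε, div_mul_eq_mul_div, div_lt_iff₀ (by positivity)]
      nlinarith
    have h4 : ε * ∫ x in Aᶜ, f₀ x ∂μ ≤ ε * If :=
      mul_le_mul_of_nonneg_left hcomp3 (le_of_lt hεpos)
    linarith [hsplit, hcomp, hcomp2 ▸ hcomp, h4]
  -- the key inequality for each n with n*ε ≥ 2
  have key : ∀ n : ℕ, 2 ≤ (n:ℝ) * ε → Real.log ((n:ℝ) * ε) * IA ≤ C * E₀ f₀ := by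
    intro n hn2
    set fn : E → ℝ := fun x => Real.log ((n:ℝ) * f₀ x + 1) with hfn
    have hdom : fn ∈ Dom₀ := hclosed n
    have hnpos : 0 < (n:ℝ) := by
      rcases Nat.eq_zero_or_pos n with h | h
      · simp [h] at hn2; linarith
      · exact_mod_cast h
    have hu : ∀ x, (0:ℝ) < (n:ℝ) * f₀ x + 1 := fun x => by
      have := hf₀pos x; nlinarith
    have hu1 : ∀ x, (1:ℝ) ≤ (n:ℝ) * f₀ x + 1 := fun x => by
      have := hf₀pos x; nlinarith
    have hexp : ∀ x, Real.exp (fn x) = (n:ℝ) * f₀ x + 1 := fun x =>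
      Real.exp_log (hu x)
    have hexp2 : ∀ x, Real.exp (2 * fn x) = ((n:ℝ) * f₀ x + 1)^2 := fun x => by
      rw [two_mul, Real.exp_add, hexp, sq]
    set φ : E → ℝ := fun x =>
      2 * ((n:ℝ) * f₀ x + 1)^2 * Real.log ((n:ℝ) * f₀ x + 1)
        - ((n:ℝ) * f₀ x + 1)^2 + 1 with hφ
    set P := ∫ γ, (Real.exp (∫ x, fn x ∂γ)) ^ 2 ∂pm with hP
    have hPpos : 0 < P := hfin fn hdom
    -- LSI applied to F
    have h1 := hLSI (fun γ => Real.exp (∫ x, fn x ∂γ)) (hmemDom fn hdom)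
    rw [hEnt fn hdom, hEform fn hdom] at h1
    have hint : ∫ x, (2 * fn x * Real.exp (2 * fn x) - Real.exp (2 * fn x) + 1) ∂μ
        = ∫ x, φ x ∂μ := by
      apply integral_congr_ae
      apply Filter.Eventually.of_forall
      intro x
      show 2 * fn x * Real.exp (2 * fn x) - Real.exp (2 * fn x) + 1 = φ x
      rw [hexp2 x]
      simp only [hφ, hfn]
      ring
    have hE0 : E₀ (fun x => Real.exp (fn x) - 1) = (n:ℝ)^2 * E₀ f₀ := by
      have : (fun x => Real.exp (fn x) - 1) = fun x => (n:ℝ) * f₀ x := by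
        funext x; rw [hexp x]; ring
      rw [this, hscale]
    rw [hint, hE0] at h1
    have h2 : ∫ x, φ x ∂μ ≤ C * ((n:ℝ)^2 * E₀ f₀) := by
      have := h1
      rw [mul_comm C (P * ((n:ℝ)^2 * E₀ f₀))] at this
      nlinarith [this, hPpos]
    -- integrability of φ
    have hmφ : Measurable φ := by
      apply Measurable.add _ measurable_const
      apply Measurable.sub
      · exact ((((hmf₀.const_mul _).add_const 1).pow_const 2).const_mul 2).mul
          ((hmf₀.const_mul _).add_const 1).log
      · exact ((hmf₀.const_mul _).add_const 1).pow_const 2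
    have hφnn : ∀ x, 0 ≤ φ x := fun x => aux_nonneg (hu1 x)
    have hφint : Integrable φ μ := by
      apply Integrable.mono' (hf₀1.const_mul (2 * ((n:ℝ)*M+1)^2 * (n:ℝ)))
        hmφ.aestronglyMeasurable
      apply Filter.Eventually.of_forall
      intro x
      rw [Real.norm_of_nonneg (hφnn x)]
      have hub := aux_upper (hu1 x)
      have hMx : (n:ℝ) * f₀ x + 1 ≤ (n:ℝ) * M + 1 := by
        have := hM x; nlinarith
      have h0 : 0 ≤ (n:ℝ) * f₀ x := by
        have := hf₀pos x; positivity
      calc φ x ≤ 2 * ((n:ℝ) * f₀ x + 1)^2 * ((n:ℝ) * f₀ x + 1 - 1) := hub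
        _ ≤ 2 * ((n:ℝ)*M+1)^2 * ((n:ℝ) * f₀ x) := by
              have hu0 : (0:ℝ) ≤ (n:ℝ)*f₀ x + 1 := by linarith [hu1 x]
              have hsq : ((n:ℝ)*f₀ x+1)^2 ≤ ((n:ℝ)*M+1)^2 := by nlinarith
              nlinarith [mul_le_mul_of_nonneg_right hsq h0]
        _ = 2 * ((n:ℝ)*M+1)^2 * (n:ℝ) * f₀ x := by ring
    -- lower bound on ∫ φ
    have hlow : (n:ℝ)^2 * Real.log ((n:ℝ) * ε) * IA ≤ ∫ x, φ x ∂μ := by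
      have hsetle : ∫ x in A, φ x ∂μ ≤ ∫ x, φ x ∂μ :=
        setIntegral_le_integral hφint (Filter.Eventually.of_forall hφnn)
      have hmono : ∫ x in A, (n:ℝ)^2 * Real.log ((n:ℝ)*ε) * f₀ x ^ 2 ∂μ
          ≤ ∫ x in A, φ x ∂μ := by
        apply setIntegral_mono_on ((hf₀2.const_mul _).integrableOn)
          hφint.integrableOn hA
        intro x hx
        have hxε : ε ≤ f₀ x := hx
        have hu3 : 3 ≤ (n:ℝ) * f₀ x + 1 := by nlinarith
        have hl := aux_lower hu3
        have hlog : Real.log ((n:ℝ)*ε) ≤ Real.log ((n:ℝ) * f₀ x + 1) := by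
          apply Real.log_le_log (by nlinarith)
          nlinarith
        have hsq : ((n:ℝ) * f₀ x + 1 - 1)^2 = (n:ℝ)^2 * f₀ x ^2 := by ring
        have hlognn : 0 ≤ Real.log ((n:ℝ)*ε) := by
          apply Real.log_nonneg; linarith
        calc (n:ℝ)^2 * Real.log ((n:ℝ)*ε) * f₀ x ^ 2
            = ((n:ℝ) * f₀ x + 1 - 1)^2 * Real.log ((n:ℝ)*ε) := by rw [hsq]; ring
          _ ≤ ((n:ℝ) * f₀ x + 1 - 1)^2 * Real.log ((n:ℝ) * f₀ x + 1) := by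
              apply mul_le_mul_of_nonneg_left hlog (by positivity)
          _ ≤ φ x := hl
      have heq : ∫ x in A, (n:ℝ)^2 * Real.log ((n:ℝ)*ε) * f₀ x ^ 2 ∂μ
          = (n:ℝ)^2 * Real.log ((n:ℝ)*ε) * IA := by
        rw [hIAdef, ← integral_const_mul]
      linarith [heq ▸ hmono]
    have h3 : (n:ℝ)^2 * Real.log ((n:ℝ)*ε) * IA ≤ C * ((n:ℝ)^2 * E₀ f₀) :=
      le_trans hlow h2
    have hn2pos : 0 < (n:ℝ)^2 := by positivity
    nlinarith [h3]
  -- choose n large to contradict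
  set B := C * E₀ f₀ / IA with hB
  set n : ℕ := ⌈(Real.exp (B+1) + 2) / ε⌉₊ with hn
  have hceil : (Real.exp (B+1) + 2) / ε ≤ (n:ℝ) := Nat.le_ceil _
  have hnε : Real.exp (B+1) + 2 ≤ (n:ℝ) * ε := by
    rw [div_le_iff₀ hεpos] at hceil; linarith
  have h2n : 2 ≤ (n:ℝ) * ε := by
    have := Real.exp_pos (B+1); linarith
  have hk := key n h2n
  have hlogB : B + 1 ≤ Real.log ((n:ℝ) * ε) := by
    rw [← Real.log_exp (B+1)]
    apply Real.log_le_log (Real.exp_pos _)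
    linarith
  have : Real.log ((n:ℝ)*ε) ≤ B := by
    rw [hB, le_div_iff₀ hIA]
    linarith [hk]
  linarith
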